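/- Let A and B be nontrivial finite abelian groups, let G = A ∗ B be their free product, and let H = G/γ_2([G,G]) where γ_2([G,G]) = [[G,G],[G,G]] is the second term of the lower central series of the commutator subgroup [G,G]. Then every element of the center of H lies in the image of [G,G] under the quotient homomorphism G → H. -/

import Mathlib

open Monoid SemidirectProduct
open scoped commutatorElement

/-- The shift action of `B` on `B → A`. -/
def wAct (A B : Type) [CommGroup A] [CommGroup B] : B →* MulAut (B → A) where
  toFun b :=
    { toFun := fun f x => f (b⁻¹ * x)
      invFun := fun f x => f (b * x)
      left_inv := fun f => by funext x; simp [← mul_assoc]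
      right_inv := fun f => by funext x; simp [← mul_assoc]
      map_mul' := fun f g => rfl }
  map_one' := by ext f x; simp
  map_mul' b c := by ext f x; simp [mul_assoc, mul_inv_rev]

theorem wAct_apply {A B : Type} [CommGroup A] [CommGroup B] (b : B) (f : B → A) (x : B) :
    wAct A B b f x = f (b⁻¹ * x) := rfl

open scoped Classical in
/-- Embedding of `A` in `B → A` supported at `1`. -/
noncomputable def sing (A B : Type) [CommGroup A] [CommGroup B] : A →* (B → A) where
  toFun a x := if x = 1 then a else 1
  map_one' := by funext x; simp
  map_mul' a b := by funext x; dsimp; split <;> simp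

theorem sing_one {A B : Type} [CommGroup A] [CommGroup B] (a : A) :
    sing A B a 1 = a := by simp [sing]

theorem sing_ne {A B : Type} [CommGroup A] [CommGroup B] (a : A) {x : B} (hx : x ≠ 1) :
    sing A B a x = 1 := by simp [sing, hx]

/-- The homomorphism from the free product to the wreath product. -/
noncomputable def psi (A B : Type) [CommGroup A] [CommGroup B] :
    Monoid.Coprod A B →* (B → A) ⋊[wAct A B] B :=
  Monoid.Coprod.lift (SemidirectProduct.inl.comp (sing A B)) SemidirectProduct.inr

/-- The wreath-product detection lemma: if `g` commutes with everything modulo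
`⁅[G,G],[G,G]⁆`, then the projection of `g` to `B` is trivial. -/
theorem key_lemma (A B : Type) [CommGroup A] [CommGroup B] [Nontrivial A]
    (g : Monoid.Coprod A B)
    (hg : ∀ h : Monoid.Coprod A B, ⁅g, h⁆ ∈
      (⁅commutator (Monoid.Coprod A B), commutator (Monoid.Coprod A B)⁆ :
        Subgroup (Monoid.Coprod A B))) :
    Monoid.Coprod.lift (1 : A →* B) (MonoidHom.id B) g = 1 := by
  -- psi kills commutators of the commutator subgroup
  have hcomm : ∀ c ∈ commutator (Monoid.Coprod A B), rightHom (psi A B c) = 1 := by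
    intro c hc
    have : commutator (Monoid.Coprod A B) ≤
        ((rightHom : _ ⋊[wAct A B] B →* B).comp (psi A B)).ker :=
      Abelianization.commutator_subset_ker _
    exact this hc
  have hker : (⁅commutator (Monoid.Coprod A B), commutator (Monoid.Coprod A B)⁆ :
      Subgroup (Monoid.Coprod A B)) ≤ (psi A B).ker := by
    rw [Subgroup.commutator_le]
    intro c hc d hd
    rw [MonoidHom.mem_ker, map_commutatorElement, commutatorElement_eq_one_iff_commute]
    have hc' : psi A B c ∈ (inl : (B → A) →* _ ⋊[wAct A B] B).range := by
      rw [range_inl_eq_ker_rightHom, MonoidHom.mem_ker]; exact hcomm c hc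
    have hd' : psi A B d ∈ (inl : (B → A) →* _ ⋊[wAct A B] B).range := by
      rw [range_inl_eq_ker_rightHom, MonoidHom.mem_ker]; exact hcomm d hd
    obtain ⟨u, hu⟩ := hc'
    obtain ⟨v, hv⟩ := hd'
    rw [commute_iff_eq, ← hu, ← hv, ← map_mul, ← map_mul, mul_comm]
  -- psi g commutes with psi (inl a0)
  obtain ⟨a0, ha0⟩ := exists_ne (1 : A)
  have hcg : psi A B g * psi A B (Monoid.Coprod.inl a0)
      = psi A B (Monoid.Coprod.inl a0) * psi A B g := by
    have h := hker (hg (Monoid.Coprod.inl a0))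
    rw [MonoidHom.mem_ker, map_commutatorElement, commutatorElement_eq_one_iff_commute] at h
    exact h
  have h1 : psi A B (Monoid.Coprod.inl a0) = inl (sing A B a0) := by
    rw [psi, Monoid.Coprod.lift_apply_inl]; rfl
  rw [h1] at hcg
  have hleft := congrArg SemidirectProduct.left hcg
  simp only [mul_left, left_inl, right_inl, map_one, MulAut.one_apply] at hleft
  have hfix : (wAct A B (psi A B g).right) (sing A B a0) = sing A B a0 := by
    rw [mul_comm (sing A B a0) ((psi A B g).left)] at hleft
    exact mul_left_cancel hleft
  have hb1 : (psi A B g).right = 1 := by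
    by_contra hb1
    have hcf := congrFun hfix (psi A B g).right
    rw [wAct_apply, inv_mul_cancel, sing_one, sing_ne a0 hb1] at hcf
    exact ha0 hcf
  -- rightHom ∘ psi = lift 1 id
  have hrψ : (rightHom : _ ⋊[wAct A B] B →* B).comp (psi A B) =
      Monoid.Coprod.lift (1 : A →* B) (MonoidHom.id B) := by
    apply Monoid.Coprod.hom_ext
    · ext a
      simp [psi, Monoid.Coprod.lift_apply_inl]
    · ext x
      simp [psi, Monoid.Coprod.lift_apply_inr]
  calc Monoid.Coprod.lift (1 : A →* B) (MonoidHom.id B) g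
      = rightHom (psi A B g) := by rw [← hrψ]; rfl
    _ = 1 := hb1

theorem mem_commutator_of_proj (A B : Type) [CommGroup A] [CommGroup B]
    (g : Monoid.Coprod A B)
    (hA : Monoid.Coprod.lift (MonoidHom.id A) (1 : B →* A) g = 1)
    (hB : Monoid.Coprod.lift (1 : A →* B) (MonoidHom.id B) g = 1) :
    g ∈ commutator (Monoid.Coprod A B) := by
  let pA : Monoid.Coprod A B →* A := Monoid.Coprod.lift (MonoidHom.id A) 1
  let pB : Monoid.Coprod A B →* B := Monoid.Coprod.lift 1 (MonoidHom.id B)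
  let s : A × B →* Abelianization (Monoid.Coprod A B) :=
    ((Abelianization.of).comp (Monoid.Coprod.inl)).coprod
      ((Abelianization.of).comp (Monoid.Coprod.inr))
  have hsp : s.comp (pA.prod pB) = Abelianization.of := by
    apply Monoid.Coprod.hom_ext
    · ext a
      simp [s, pA, pB, MonoidHom.coprod_apply, Monoid.Coprod.lift_apply_inl]
    · ext x
      simp [s, pA, pB, MonoidHom.coprod_apply, Monoid.Coprod.lift_apply_inr]
  have h1 : Abelianization.of g = 1 := by
    rw [← hsp]
    show s (pA g, pB g) = 1
    rw [show pA g = 1 from hA, show pB g = 1 from hB]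
    exact map_one s
  exact (QuotientGroup.eq_one_iff g).mp h1

/-- Let `A` and `B` be nontrivial finite abelian groups, `G = A ∗ B` their free product, and
`H = G/γ_2([G,G])` where `γ_2([G,G]) = ⁅[G,G],[G,G]⁆`. Then every element of the center of `H`
lies in the image of the commutator subgroup `[G,G]` under the quotient map `G → H`. -/
theorem center_le_image_commutator
    (A B : Type) [CommGroup A] [CommGroup B] [Finite A] [Finite B]
    [Nontrivial A] [Nontrivial B] :
    ∀ x ∈ Subgroup.center
        (Monoid.Coprod A B ⧸
          (⁅commutator (Monoid.Coprod A B), commutator (Monoid.Coprod A B)⁆ :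
            Subgroup (Monoid.Coprod A B))),
      x ∈ Subgroup.map
        (QuotientGroup.mk'
          (⁅commutator (Monoid.Coprod A B), commutator (Monoid.Coprod A B)⁆ :
            Subgroup (Monoid.Coprod A B)))
        (commutator (Monoid.Coprod A B)) := by
  intro x hx
  obtain ⟨g, rfl⟩ := QuotientGroup.mk'_surjective
    (⁅commutator (Monoid.Coprod A B), commutator (Monoid.Coprod A B)⁆ :
      Subgroup (Monoid.Coprod A B)) x
  have hg : ∀ h : Monoid.Coprod A B, ⁅g, h⁆ ∈
      (⁅commutator (Monoid.Coprod A B), commutator (Monoid.Coprod A B)⁆ :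
        Subgroup (Monoid.Coprod A B)) := by
    intro h
    have hcentral := (Subgroup.mem_center_iff.mp hx) (QuotientGroup.mk' _ h)
    rw [← QuotientGroup.eq_one_iff]
    show (QuotientGroup.mk' _) ⁅g, h⁆ = 1
    rw [map_commutatorElement, commutatorElement_eq_one_iff_commute]
    exact hcentral.symm
  -- B-projection of g is trivial
  have hB : Monoid.Coprod.lift (1 : A →* B) (MonoidHom.id B) g = 1 := key_lemma A B g hg
  -- A-projection of g is trivial, via the swap isomorphism
  have hA : Monoid.Coprod.lift (MonoidHom.id A) (1 : B →* A) g = 1 := by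
    let e : Monoid.Coprod A B ≃* Monoid.Coprod B A := MulEquiv.coprodComm A B
    have hg' : ∀ h : Monoid.Coprod B A, ⁅e g, h⁆ ∈
        (⁅commutator (Monoid.Coprod B A), commutator (Monoid.Coprod B A)⁆ :
          Subgroup (Monoid.Coprod B A)) := by
      intro h
      have h1 := hg (e.symm h)
      have h2 : (e : Monoid.Coprod A B →* Monoid.Coprod B A) ⁅g, e.symm h⁆ = ⁅e g, h⁆ := by
        rw [map_commutatorElement]
        simp
      rw [← h2]
      have hsurj : Function.Surjective ⇑(e : Monoid.Coprod A B →* Monoid.Coprod B A) :=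
        e.surjective
      have hmap : Subgroup.map (e : Monoid.Coprod A B →* Monoid.Coprod B A)
          (⁅commutator (Monoid.Coprod A B), commutator (Monoid.Coprod A B)⁆ :
            Subgroup (Monoid.Coprod A B)) =
          ⁅commutator (Monoid.Coprod B A), commutator (Monoid.Coprod B A)⁆ := by
        rw [Subgroup.map_commutator]
        congr 1 <;>
        · rw [commutator_def, commutator_def, Subgroup.map_commutator,
            Subgroup.map_top_of_surjective _ hsurj]
      rw [← hmap]
      exact Subgroup.mem_map_of_mem _ h1
    have hkey := key_lemma B A (e g) hg'
    have hcomp : (Monoid.Coprod.lift (1 : B →* A) (MonoidHom.id A)).comp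
        (e : Monoid.Coprod A B →* Monoid.Coprod B A) =
        Monoid.Coprod.lift (MonoidHom.id A) (1 : B →* A) := by
      apply Monoid.Coprod.hom_ext
      · ext a
        simp [e, MulEquiv.coprodComm, Monoid.Coprod.lift_apply_inr]
      · ext b
        simp [e, MulEquiv.coprodComm, Monoid.Coprod.lift_apply_inl]
    calc Monoid.Coprod.lift (MonoidHom.id A) (1 : B →* A) g
        = Monoid.Coprod.lift (1 : B →* A) (MonoidHom.id A) (e g) := by rw [← hcomp]; rfl
      _ = 1 := hkey
  exact Subgroup.mem_map_of_mem _ (mem_commutator_of_proj A B g hA hB)
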